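/- For n ≥ 1 and the symmetric group S_n acting on ℂ^n by permutation matrices, the space of fixed vectors of the k-fold tensor power of the permutation representation has dimension equal to the number of partitions of {1,...,k} into at most n blocks; in particular for n ≥ k it equals the Bell number B_k. -/
import Mathlib

noncomputable def FixSub (n k : ℕ) : Submodule ℂ ((Fin k → Fin n) → ℂ) where
  carrier := {f | ∀ σ : Equiv.Perm (Fin n), ∀ t : Fin k → Fin n, f (σ ∘ t) = f t}
  add_mem' := by
    intro f g hf hg σ t
    simp only [Pi.add_apply, hf σ t, hg σ t]
  zero_mem' := by intro σ t; rfl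
  smul_mem' := by
    intro c f hf σ t
    simp only [Pi.smul_apply, hf σ t]

instance setoidFinite (k : ℕ) : Finite (Setoid (Fin k)) :=
  Finite.of_injective (fun s => s.r) (by
    intro s t h
    cases s; cases t; congr)

lemma ncard_classes_eq (k : ℕ) (s : Setoid (Fin k)) :
    s.classes.ncard = Nat.card (Quotient s) := by
  rw [← Nat.card_coe_set_eq]
  exact (Nat.card_congr (s.quotientEquivClasses)).symm

lemma lemA (n k : ℕ) (t : Fin k → Fin n) : (Setoid.ker t).classes.ncard ≤ n := by
  rw [ncard_classes_eq]
  rw [Nat.card_congr (Setoid.quotientKerEquivRange t)]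
  calc Nat.card (Set.range t) = (Set.range t).ncard := Nat.card_coe_set_eq _
    _ ≤ (Set.univ : Set (Fin n)).ncard :=
        Set.ncard_le_ncard (Set.subset_univ _) Set.finite_univ
    _ = n := by rw [Set.ncard_univ, Nat.card_eq_fintype_card, Fintype.card_fin]

lemma lemB (n k : ℕ) (s : Setoid (Fin k)) (hs : s.classes.ncard ≤ n) :
    ∃ t : Fin k → Fin n, Setoid.ker t = s := by
  classical
  letI : Fintype (Quotient s) := Fintype.ofFinite _
  have hc : Fintype.card (Quotient s) ≤ Fintype.card (Fin n) := by
    rw [Fintype.card_fin, ← Nat.card_eq_fintype_card, ← ncard_classes_eq]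
    exact hs
  obtain ⟨q⟩ := Function.Embedding.nonempty_of_card_le hc
  letI := s
  refine ⟨fun x => q ⟦x⟧, ?_⟩
  ext a b
  rw [Setoid.ker_def]
  constructor
  · intro h
    exact Quotient.exact (q.injective h)
  · intro h
    exact congrArg q (Quotient.sound h)

lemma lemC (n k : ℕ) (t t' : Fin k → Fin n) (h : Setoid.ker t = Setoid.ker t') :
    ∃ σ : Equiv.Perm (Fin n), σ ∘ t = t' := by
  classical
  let e : {y // y ∈ Set.range t} ≃ {y // y ∈ Set.range t'} :=
    (Setoid.quotientKerEquivRange t).symm.trans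
      ((Quotient.congrRight (fun a b => by rw [h])).trans (Setoid.quotientKerEquivRange t'))
  refine ⟨e.extendSubtype, funext fun x => ?_⟩
  have hx : t x ∈ Set.range t := ⟨x, rfl⟩
  rw [Function.comp_apply, e.extendSubtype_apply_of_mem _ hx]
  have h1 : (Setoid.quotientKerEquivRange t).symm ⟨t x, hx⟩ = Quotient.mk'' x := by
    rw [Equiv.symm_apply_eq]; rfl
  show ((Setoid.quotientKerEquivRange t')
      ((Quotient.congrRight (fun a b => by rw [h]))
        ((Setoid.quotientKerEquivRange t).symm ⟨t x, hx⟩)) : Fin n) = t' x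
  rw [h1]
  rfl

noncomputable def fixEquiv (n k : ℕ) :
    FixSub n k ≃ₗ[ℂ] ({s : Setoid (Fin k) // s.classes.ncard ≤ n} → ℂ) := by
  classical
  have rep : ∀ s : {s : Setoid (Fin k) // s.classes.ncard ≤ n},
      ∃ t : Fin k → Fin n, Setoid.ker t = s.1 := fun s => lemB n k s.1 s.2
  choose r hr using rep
  exact
  { toFun := fun f s => (f : (Fin k → Fin n) → ℂ) (r s)
    map_add' := fun f g => rfl
    map_smul' := fun c f => rfl
    invFun := fun g => ⟨fun t => g ⟨Setoid.ker t, lemA n k t⟩, by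
      intro σ t
      have : Setoid.ker (σ ∘ t) = Setoid.ker t := by
        ext a b
        simp [Setoid.ker_def, σ.injective.eq_iff]
      simp only [this]⟩
    left_inv := by
      intro f
      ext t
      obtain ⟨σ, hσ⟩ := lemC n k (r ⟨Setoid.ker t, lemA n k t⟩) t (by rw [hr])
      have := f.2 σ (r ⟨Setoid.ker t, lemA n k t⟩)
      simp only [hσ] at this
      exact this.symm
    right_inv := by
      intro g
      funext s
      simp only
      congr 1
      exact Subtype.ext (hr s) }

theorem finrank_fixed_points_tensor_power (n k : ℕ) (hn : 1 ≤ n) :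
    Module.finrank ℂ (FixSub n k)
      = Set.ncard {s : Setoid (Fin k) | s.classes.ncard ≤ n} ∧
    (k ≤ n → Module.finrank ℂ (FixSub n k)
      = Set.ncard (Set.univ : Set (Setoid (Fin k)))) := by
  classical
  letI : Fintype {s : Setoid (Fin k) // s.classes.ncard ≤ n} := Fintype.ofFinite _
  letI : Fintype ↑{s : Setoid (Fin k) | s.classes.ncard ≤ n} := Fintype.ofFinite _
  have h1 : Module.finrank ℂ (FixSub n k)
      = Set.ncard {s : Setoid (Fin k) | s.classes.ncard ≤ n} := by
    rw [(fixEquiv n k).finrank_eq, Module.finrank_pi, ← Nat.card_coe_set_eq,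
      Nat.card_eq_fintype_card]
    exact Fintype.card_congr (Equiv.refl _)
  refine ⟨h1, fun hk => ?_⟩
  rw [h1]
  congr 1
  ext s
  simp only [Set.mem_setOf_eq, Set.mem_univ, iff_true]
  rw [ncard_classes_eq]
  calc Nat.card (Quotient s) ≤ Nat.card (Fin k) :=
        Nat.card_le_card_of_surjective _ (Quotient.mk''_surjective)
    _ = k := by simp
    _ ≤ n := hk
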